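/- For every constant c₁ > 0 there is a constant C > 0 such that for all sufficiently large positive integers N the following holds. Let β be an integer with 1 < |β| ≤ N, and for each integer α let 𝒫(α) be the set of primes q ∈ (√N/2, √N] with Legendre symbol (β|q) = 1 such that α is a primitive root modulo q. Then the number of integers α ∈ [-N, N] with #𝒫(α) > c₁·√N/log N but v_q(α^{q-1} - 1) > 1 for every q ∈ 𝒫(α) is at most C · N^{1/2}. -/

import Mathlib

section Aux

lemma binom_aux (a d : ℤ) : ∀ m : ℕ, ∃ k : ℤ,
    (a + d) ^ (m + 1) = a ^ (m + 1) + ((m : ℤ) + 1) * a ^ m * d + d ^ 2 * k := by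
  intro m
  induction m with
  | zero => exact ⟨0, by ring⟩
  | succ m ih =>
    obtain ⟨k, hk⟩ := ih
    refine ⟨a * k + ((m : ℤ) + 1) * a ^ m + d * k, ?_⟩
    have h : (a + d) ^ (m + 1 + 1) = (a + d) * (a + d) ^ (m + 1) := by ring
    rw [h, hk]
    push_cast
    ring

lemma lift_unique {q : ℕ} (hq : q.Prime) (hq3 : 3 ≤ q) {a b : ℤ}
    (hab : (q : ℤ) ∣ b - a) (ha : ((q : ℤ)) ^ 2 ∣ a ^ (q - 1) - 1)
    (hb : ((q : ℤ)) ^ 2 ∣ b ^ (q - 1) - 1) : ((q : ℤ)) ^ 2 ∣ b - a := by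
  have hq0 : (q : ℤ) ≠ 0 := by positivity
  have hqp : Prime (q : ℤ) := Nat.prime_iff_prime_int.mp hq
  have hqa : ¬ (q : ℤ) ∣ a := by
    intro h
    have h1 : (q : ℤ) ∣ a ^ (q - 1) := dvd_pow h (by omega)
    have h2 : (q : ℤ) ∣ a ^ (q - 1) - 1 :=
      dvd_trans (dvd_pow_self (q : ℤ) two_ne_zero) ha
    have h3 : (q : ℤ) ∣ 1 := by
      have := dvd_sub h1 h2
      simpa using this
    have := Int.le_of_dvd one_pos h3
    omega
  obtain ⟨t, ht⟩ := hab
  obtain ⟨k, hk⟩ := binom_aux a (b - a) (q - 2)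
  have he : q - 2 + 1 = q - 1 := by omega
  rw [he] at hk
  have hb' : a + (b - a) = b := by ring
  rw [hb'] at hk
  set c : ℤ := ((q - 2 : ℕ) : ℤ) + 1 with hc
  have hdiv : (q : ℤ) ^ 2 ∣ c * a ^ (q - 2) * (b - a) + (b - a) ^ 2 * k := by
    have h2 := dvd_sub hb ha
    have h3 : (b ^ (q - 1) - 1) - (a ^ (q - 1) - 1)
        = c * a ^ (q - 2) * (b - a) + (b - a) ^ 2 * k := by rw [hk]; ring
    rwa [h3] at h2
  rw [ht] at hdiv
  have hdiv2 : (q : ℤ) ^ 2 ∣ (q : ℤ) * (c * a ^ (q - 2) * t) := by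
    have h4 : (q : ℤ) ^ 2 ∣ ((q : ℤ) * t) ^ 2 * k := ⟨t ^ 2 * k, by ring⟩
    have h5 := dvd_sub hdiv h4
    have h6 : c * a ^ (q - 2) * ((q : ℤ) * t) + ((q : ℤ) * t) ^ 2 * k - ((q : ℤ) * t) ^ 2 * k
        = (q : ℤ) * (c * a ^ (q - 2) * t) := by ring
    rwa [h6] at h5
  have hdiv3 : (q : ℤ) ∣ c * a ^ (q - 2) * t := by
    rw [pow_two] at hdiv2
    exact (mul_dvd_mul_iff_left hq0).mp hdiv2
  have hqt : (q : ℤ) ∣ t := by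
    rcases hqp.dvd_mul.mp hdiv3 with h | h
    · rcases hqp.dvd_mul.mp h with h' | h'
      · exfalso
        have := Int.le_of_dvd (by positivity) h'
        omega
      · exact absurd (hqp.dvd_of_dvd_pow h') hqa
    · exact h
  obtain ⟨s, hs⟩ := hqt
  exact ⟨s, by rw [ht, hs]; ring⟩

lemma count_le (N q : ℕ) (hq : q.Prime) (hq3 : 3 ≤ q) (hNq : N < 4 * q ^ 2) :
    ((Finset.Icc (-(N : ℤ)) N).filter (fun α => ((q : ℤ)) ^ 2 ∣ α ^ (q - 1) - 1)).card
      ≤ 8 * q := by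
  classical
  haveI : NeZero q := ⟨by omega⟩
  have hq2 : (0 : ℤ) < (q : ℤ) ^ 2 := by positivity
  have h8 : (2 * N : ℤ) < 8 * (q : ℤ) ^ 2 := by exact_mod_cast by nlinarith [hNq]
  have hcard : ((Finset.univ : Finset (ZMod q)) ×ˢ Finset.Icc (0 : ℤ) 7).card = q * 8 := by
    rw [Finset.card_product, Finset.card_univ, ZMod.card]
    congr 1
  have hinj : ((Finset.Icc (-(N : ℤ)) N).filter
      (fun α => ((q : ℤ)) ^ 2 ∣ α ^ (q - 1) - 1)).card
      ≤ ((Finset.univ : Finset (ZMod q)) ×ˢ Finset.Icc (0 : ℤ) 7).card := by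
    apply Finset.card_le_card_of_injOn
      (fun α : ℤ => (((α : ZMod q)), (α + (N : ℤ)) / (q : ℤ) ^ 2))
    · intro α hα
      obtain ⟨hmem, _⟩ := Finset.mem_filter.mp hα
      obtain ⟨h1, h2⟩ := Finset.mem_Icc.mp hmem
      refine Finset.mem_product.mpr ⟨Finset.mem_univ _, Finset.mem_Icc.mpr ⟨?_, ?_⟩⟩
      · exact Int.ediv_nonneg (by linarith) hq2.le
      · have : (α + N) / (q : ℤ) ^ 2 < 8 := by
          rw [Int.ediv_lt_iff_lt_mul hq2]
          linarith
        dsimp only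
        omega
    · intro α hα β hβ hf
      obtain ⟨hmemα, hdα⟩ := Finset.mem_filter.mp hα
      obtain ⟨hmemβ, hdβ⟩ := Finset.mem_filter.mp hβ
      have hfst : ((α : ZMod q)) = (β : ZMod q) := congrArg Prod.fst hf
      have hsnd : (α + N) / (q : ℤ) ^ 2 = (β + N) / (q : ℤ) ^ 2 := congrArg Prod.snd hf
      have hmod : (q : ℤ) ∣ β - α := ((ZMod.intCast_eq_intCast_iff _ _ _).mp hfst).dvd
      have hdvd2 : (q : ℤ) ^ 2 ∣ β - α := lift_unique hq hq3 hmod hdα hdβ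
      have e1 := Int.mul_ediv_add_emod (α + N) ((q : ℤ) ^ 2)
      have e2 := Int.mul_ediv_add_emod (β + N) ((q : ℤ) ^ 2)
      rw [← hsnd] at e2
      have key : β - α = (β + N) % ((q : ℤ) ^ 2) - (α + N) % ((q : ℤ) ^ 2) := by linarith
      have hr1 := Int.emod_nonneg (α + N) hq2.ne'
      have hr2 := Int.emod_nonneg (β + N) hq2.ne'
      have hl1 := Int.emod_lt_of_pos (α + N) hq2
      have hl2 := Int.emod_lt_of_pos (β + N) hq2
      have h0 : β - α = 0 := by
        apply Int.eq_zero_of_abs_lt_dvd hdvd2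
        rw [key, abs_lt]
        constructor <;> linarith
      linarith
  rw [hcard] at hinj
  omega

lemma cheb (n : ℕ) (hn : 2 ≤ n) :
    ((((Finset.Ioc n (2 * n)).filter Nat.Prime).card : ℝ)) * Real.log n
      ≤ (n : ℝ) * Real.log 4 := by
  classical
  set Q := (Finset.Ioc n (2 * n)).filter Nat.Prime with hQ
  have hdvd : ∏ p ∈ Q, p ∣ Nat.centralBinom n := by
    refine Finset.prod_primes_dvd _ (fun p hp => (Finset.mem_filter.mp hp).2.prime) ?_
    intro p hp
    obtain ⟨hmem, hpp⟩ := Finset.mem_filter.mp hp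
    obtain ⟨hlo, hhi⟩ := Finset.mem_Ioc.mp hmem
    have h1 : p ∣ (2 * n).factorial := (Nat.Prime.dvd_factorial hpp).mpr hhi
    have h2 : ¬ p ∣ n.factorial := by rw [Nat.Prime.dvd_factorial hpp]; omega
    have h3 : Nat.centralBinom n * (n.factorial * n.factorial) = (2 * n).factorial := by
      have h := Nat.choose_mul_factorial_mul_factorial (show n ≤ 2 * n by omega)
      rw [Nat.centralBinom]
      have h4 : 2 * n - n = n := by omega
      rw [h4] at h
      rw [← h]; ring
    rw [← h3] at h1
    rcases (Nat.Prime.dvd_mul hpp).mp h1 with h | h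
    · exact h
    · rcases (Nat.Prime.dvd_mul hpp).mp h with h' | h' <;> exact absurd h' h2
  have hpos : 0 < Nat.centralBinom n := Nat.centralBinom_pos n
  have h4 : n ^ Q.card ≤ Nat.centralBinom n := by
    refine le_trans (Finset.pow_card_le_prod Q _ n ?_) (Nat.le_of_dvd hpos hdvd)
    intro x hx
    exact (Finset.mem_Ioc.mp (Finset.mem_filter.mp hx).1).1.le
  have h5 : Nat.centralBinom n ≤ 4 ^ n := by
    have hs := Finset.single_le_sum (f := fun i => (2 * n).choose i)
      (fun i _ => Nat.zero_le _) (Finset.mem_range.mpr (show n < 2 * n + 1 by omega))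
    calc Nat.centralBinom n = (2 * n).choose n := rfl
      _ ≤ ∑ i ∈ Finset.range (2 * n + 1), (2 * n).choose i := hs
      _ = 2 ^ (2 * n) := Nat.sum_range_choose (2 * n)
      _ = 4 ^ n := by rw [pow_mul]; norm_num
  have hr : ((n : ℝ)) ^ Q.card ≤ (4 : ℝ) ^ n := by exact_mod_cast h4.trans h5
  have hlog := Real.log_le_log (by positivity) hr
  rw [Real.log_pow, Real.log_pow] at hlog
  exact_mod_cast hlog

end Aux


/-- The Legendre symbol `(a | p)` for a natural number `p` (defined to be `0` if `p` is not
prime). -/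
noncomputable def legSym (p : ℕ) (a : ℤ) : ℤ :=
  if hp : p.Prime then
    haveI : Fact p.Prime := ⟨hp⟩
    legendreSym p a
  else 0

/-- `primRootSet N β α` is the set of primes `q ∈ (√N/2, √N]` with `(β|q) = 1` such that `α`
is a primitive root modulo `q`. -/
def primRootSet (N : ℕ) (β α : ℤ) : Set ℕ :=
  {q : ℕ | q.Prime ∧ Real.sqrt N / 2 < (q : ℝ) ∧ (q : ℝ) ≤ Real.sqrt N ∧
    legSym q β = 1 ∧ orderOf ((α : ZMod q)) = q - 1}

/-- For every `c₁ > 0` there is a `C > 0` such that for all sufficiently large `N` and every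
integer `β` with `1 < |β| ≤ N`: the number of integers `α ∈ [-N, N]` with
`#𝒫(α) > c₁·√N/log N` but `v_q(α^{q-1} - 1) > 1` for every `q ∈ 𝒫(α)` is at most `C·N^{1/2}`.
(The condition `v_q(α^{q-1}-1) > 1`, with the convention `v_q(0) = ∞`, is expressed by the
disjunction with `α^{q-1} - 1 = 0`.) -/
theorem stmt14 (c₁ : ℝ) (hc₁ : 0 < c₁) : ∃ C : ℝ, 0 < C ∧ ∀ᶠ N : ℕ in Filter.atTop,
    ∀ β : ℤ, 1 < |β| → |β| ≤ (N : ℤ) →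
    ({α : ℤ | |α| ≤ (N : ℤ) ∧
        c₁ * Real.sqrt N / Real.log N < ((primRootSet N β α).ncard : ℝ) ∧
        ∀ q ∈ primRootSet N β α,
          α ^ (q - 1) - 1 = 0 ∨ 1 < padicValInt q (α ^ (q - 1) - 1)}.ncard : ℝ)
      ≤ C * Real.sqrt N := by
  classical
  refine ⟨80 / c₁, div_pos (by norm_num) hc₁, ?_⟩
  rw [Filter.eventually_atTop]
  refine ⟨2 ^ 20, fun N hN => ?_⟩
  intro β hβ1 hβ2
  have hN' : 1048576 ≤ N := by norm_num at hN; exact hN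
  have hNR : (1048576 : ℝ) ≤ (N : ℝ) := by exact_mod_cast hN'
  have hx0 : 0 < Real.sqrt N := Real.sqrt_pos.mpr (by linarith)
  have hx1024 : (1024 : ℝ) ≤ Real.sqrt N := by
    rw [show (1024 : ℝ) = Real.sqrt (1024 ^ 2) by
      rw [Real.sqrt_sq (by norm_num)]]
    exact Real.sqrt_le_sqrt (by norm_num; linarith)
  have hL0 : 0 < Real.log N := Real.log_pos (by norm_num; linarith)
  have hxsq : Real.sqrt N ^ 2 = (N : ℝ) := Real.sq_sqrt (by positivity)
  set s := Nat.sqrt N with hs'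
  set n := s / 2 with hn'
  have hsx : (s : ℝ) ≤ Real.sqrt N := Real.nat_sqrt_le_real_sqrt
  have hxs : Real.sqrt N < (s : ℝ) + 1 := by
    have := Real.real_sqrt_lt_nat_sqrt_succ (a := N)
    push_cast at this
    exact this
  have hs1024 : 1024 ≤ s := Nat.le_sqrt.mpr (by omega)
  have hn512 : 512 ≤ n := by omega
  have hNs : N < (s + 1) * (s + 1) := by
    have h := Nat.lt_succ_sqrt' N
    rwa [Nat.succ_eq_add_one, pow_two] at h
  set P := (Finset.Icc (n + 1) (2 * n + 1)).filter Nat.Prime with hP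
  have hqmem : ∀ α : ℤ, ∀ q ∈ primRootSet N β α, q ∈ P := by
    intro α q hq
    obtain ⟨hqp, hlo, hhi, -, -⟩ := hq
    have hq_le_s : q ≤ s := by
      have h1 : (q : ℝ) < (s : ℝ) + 1 := lt_of_le_of_lt hhi hxs
      have h2 : q < s + 1 := by exact_mod_cast h1
      omega
    have hq_gt : s < 2 * q := by
      have h1 : (s : ℝ) < 2 * (q : ℝ) := by linarith
      exact_mod_cast h1
    exact Finset.mem_filter.mpr ⟨Finset.mem_Icc.mpr ⟨by omega, by omega⟩, hqp⟩
  -- cardinality bound for P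
  set Q := (Finset.Ioc n (2 * n)).filter Nat.Prime with hQ
  have hPQ : P ⊆ insert (2 * n + 1) Q := by
    intro q hqP
    obtain ⟨hqI, hqp⟩ := Finset.mem_filter.mp hqP
    obtain ⟨h1, h2⟩ := Finset.mem_Icc.mp hqI
    rcases eq_or_lt_of_le h2 with h | h
    · exact Finset.mem_insert.mpr (Or.inl h)
    · exact Finset.mem_insert.mpr
        (Or.inr (Finset.mem_filter.mpr ⟨Finset.mem_Ioc.mpr ⟨by omega, by omega⟩, hqp⟩))
  have hPcard : P.card ≤ Q.card + 1 :=
    le_trans (Finset.card_le_card hPQ) (Finset.card_insert_le _ _)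
  have hcheb := cheb n (by omega)
  have hlog4 : Real.log 4 ≤ 1.4 := by
    have h2 : Real.log 2 < 0.6931471808 := Real.log_two_lt_d9
    have h4 : (4 : ℝ) = 2 ^ 2 := by norm_num
    rw [h4, Real.log_pow]
    push_cast
    linarith
  have hlog4pos : 0 < Real.log 4 := Real.log_pos (by norm_num)
  have hn512R : (512 : ℝ) ≤ (n : ℝ) := by exact_mod_cast hn512
  have hnx : (n : ℝ) ≤ Real.sqrt N / 2 := by
    have h1 : 2 * n ≤ s := by omega
    have h2 : ((2 * n : ℕ) : ℝ) ≤ (s : ℝ) := by exact_mod_cast h1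
    push_cast at h2
    linarith
  have hs2n : s ≤ 2 * n + 1 := by omega
  have hlogn : Real.log N / 4 ≤ Real.log n := by
    have hx4 : Real.sqrt N / 4 ≤ (n : ℝ) := by
      have h1 : (s : ℝ) ≤ 2 * (n : ℝ) + 1 := by exact_mod_cast hs2n
      linarith
    have h1 : Real.log (Real.sqrt N / 4) ≤ Real.log n :=
      Real.log_le_log (by positivity) hx4
    have h2 : Real.log (Real.sqrt N / 4) = Real.log N / 2 - Real.log 4 := by
      rw [Real.log_div (ne_of_gt hx0) (by norm_num), Real.log_sqrt (by positivity)]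
    have h3 : Real.log 256 ≤ Real.log N := Real.log_le_log (by norm_num) (by linarith)
    have h4 : Real.log 256 = 4 * Real.log 4 := by
      rw [show (256 : ℝ) = 4 ^ 4 by norm_num, Real.log_pow]
      push_cast
      ring
    linarith
  have hQcard : (Q.card : ℝ) * Real.log N ≤ 2.8 * Real.sqrt N := by
    have h1 : (Q.card : ℝ) * (Real.log N / 4) ≤ (Real.sqrt N / 2) * 1.4 := by
      calc (Q.card : ℝ) * (Real.log N / 4) ≤ (Q.card : ℝ) * Real.log n :=
            mul_le_mul_of_nonneg_left hlogn (Nat.cast_nonneg _)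
        _ ≤ (n : ℝ) * Real.log 4 := hcheb
        _ ≤ (Real.sqrt N / 2) * 1.4 :=
            mul_le_mul hnx hlog4 hlog4pos.le (by linarith)
    calc (Q.card : ℝ) * Real.log N = 4 * ((Q.card : ℝ) * (Real.log N / 4)) := by ring
      _ ≤ 4 * ((Real.sqrt N / 2) * 1.4) := by linarith
      _ = 2.8 * Real.sqrt N := by ring
  have hLx : Real.log N ≤ 2.2 * Real.sqrt N := by
    have h1 : Real.log (Real.sqrt N) ≤ Real.sqrt N - 1 := Real.log_le_sub_one_of_pos hx0
    have h2 : Real.log N = 2 * Real.log (Real.sqrt N) := by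
      rw [Real.log_sqrt (by positivity)]
      ring
    linarith
  have hPcardR : (P.card : ℝ) * Real.log N ≤ 5 * Real.sqrt N := by
    have h1 : (P.card : ℝ) ≤ (Q.card : ℝ) + 1 := by exact_mod_cast hPcard
    calc (P.card : ℝ) * Real.log N ≤ ((Q.card : ℝ) + 1) * Real.log N :=
          mul_le_mul_of_nonneg_right h1 hL0.le
      _ = (Q.card : ℝ) * Real.log N + Real.log N := by ring
      _ ≤ 2.8 * Real.sqrt N + 2.2 * Real.sqrt N := by linarith
      _ = 5 * Real.sqrt N := by ring
  -- the key counting bound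
  have key : ∀ S : Set ℤ,
      (∀ α ∈ S, |α| ≤ (N : ℤ) ∧
        c₁ * Real.sqrt N / Real.log N < ((primRootSet N β α).ncard : ℝ) ∧
        ∀ q ∈ primRootSet N β α, ((q : ℤ)) ^ 2 ∣ α ^ (q - 1) - 1) →
      (S.ncard : ℝ) ≤ 80 / c₁ * Real.sqrt N := by
    intro S hS
    have hsub : S ⊆ Set.Icc (-(N : ℤ)) N := fun α hα =>
      Set.mem_Icc.mpr (abs_le.mp (hS α hα).1)
    have hfin : S.Finite := (Set.finite_Icc _ _).subset hsub
    rw [Set.ncard_eq_toFinset_card _ hfin]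
    set Sf := hfin.toFinset with hSf
    have hPast : ∀ α : ℤ, primRootSet N β α = ↑(P.filter (· ∈ primRootSet N β α)) := by
      intro α
      ext q
      simp only [Finset.coe_filter, Set.mem_setOf_eq]
      exact ⟨fun h => ⟨hqmem α q h, h⟩, fun h => h.2⟩
    have hT : ∀ α ∈ Sf,
        c₁ * Real.sqrt N / Real.log N < ((P.filter (· ∈ primRootSet N β α)).card : ℝ) := by
      intro α hα
      have h := (hS α (hfin.mem_toFinset.mp hα)).2.1
      rwa [hPast α, Set.ncard_coe_finset] at h
    have hdc : ∑ α ∈ Sf, (P.filter (· ∈ primRootSet N β α)).card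
        = ∑ q ∈ P, (Sf.filter (fun α => q ∈ primRootSet N β α)).card := by
      simp_rw [Finset.card_filter]
      exact Finset.sum_comm
    have hper : ∀ q ∈ P, (Sf.filter (fun α => q ∈ primRootSet N β α)).card
        ≤ 8 * (s + 1) := by
      intro q hqP
      obtain ⟨hqI, hqp⟩ := Finset.mem_filter.mp hqP
      obtain ⟨hq1, hq2⟩ := Finset.mem_Icc.mp hqI
      have hq3 : 3 ≤ q := by omega
      have hNq : N < 4 * q ^ 2 := by
        have h1 : s + 1 ≤ 2 * q := by omega
        calc N < (s + 1) * (s + 1) := hNs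
          _ ≤ (2 * q) * (2 * q) := Nat.mul_le_mul h1 h1
          _ = 4 * q ^ 2 := by ring
      have hsubq : Sf.filter (fun α => q ∈ primRootSet N β α) ⊆
          (Finset.Icc (-(N : ℤ)) N).filter (fun α => ((q : ℤ)) ^ 2 ∣ α ^ (q - 1) - 1) := by
        intro α hα
        obtain ⟨hαSf, hqα⟩ := Finset.mem_filter.mp hα
        have hαS := hfin.mem_toFinset.mp hαSf
        exact Finset.mem_filter.mpr
          ⟨Finset.mem_Icc.mpr (abs_le.mp (hS α hαS).1), (hS α hαS).2.2 q hqα⟩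
      calc (Sf.filter (fun α => q ∈ primRootSet N β α)).card
          ≤ _ := Finset.card_le_card hsubq
        _ ≤ 8 * q := count_le N q hqp hq3 hNq
        _ ≤ 8 * (s + 1) := by omega
    have hsum2 : ∑ α ∈ Sf, (P.filter (· ∈ primRootSet N β α)).card
        ≤ P.card * (8 * (s + 1)) := by
      rw [hdc]
      calc ∑ q ∈ P, (Sf.filter (fun α => q ∈ primRootSet N β α)).card
          ≤ ∑ _q ∈ P, (8 * (s + 1)) := Finset.sum_le_sum hper
        _ = P.card * (8 * (s + 1)) := by rw [Finset.sum_const, smul_eq_mul]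
    have hsum1 : (Sf.card : ℝ) * (c₁ * Real.sqrt N / Real.log N)
        ≤ ∑ α ∈ Sf, ((P.filter (· ∈ primRootSet N β α)).card : ℝ) := by
      have h := Finset.card_nsmul_le_sum Sf
        (fun α => ((P.filter (· ∈ primRootSet N β α)).card : ℝ))
        (c₁ * Real.sqrt N / Real.log N) (fun α hα => (hT α hα).le)
      simpa [nsmul_eq_mul] using h
    have hsum2R : ∑ α ∈ Sf, ((P.filter (· ∈ primRootSet N β α)).card : ℝ)
        ≤ (P.card : ℝ) * (8 * ((s : ℝ) + 1)) := by
      have := hsum2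
      calc ∑ α ∈ Sf, ((P.filter (· ∈ primRootSet N β α)).card : ℝ)
          = ((∑ α ∈ Sf, (P.filter (· ∈ primRootSet N β α)).card : ℕ) : ℝ) := by
            rw [Nat.cast_sum]
        _ ≤ ((P.card * (8 * (s + 1)) : ℕ) : ℝ) := by exact_mod_cast hsum2
        _ = (P.card : ℝ) * (8 * ((s : ℝ) + 1)) := by push_cast; ring
    have hs1R : ((s : ℝ) + 1) ≤ 2 * Real.sqrt N := by linarith
    have hchain : (Sf.card : ℝ) * (c₁ * Real.sqrt N / Real.log N)
        ≤ (P.card : ℝ) * (16 * Real.sqrt N) := by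
      calc (Sf.card : ℝ) * (c₁ * Real.sqrt N / Real.log N)
          ≤ (P.card : ℝ) * (8 * ((s : ℝ) + 1)) := le_trans hsum1 hsum2R
        _ ≤ (P.card : ℝ) * (16 * Real.sqrt N) := by
            apply mul_le_mul_of_nonneg_left _ (Nat.cast_nonneg _)
            linarith
    -- multiply through by log N
    have hmul : (Sf.card : ℝ) * (c₁ * Real.sqrt N) ≤ 80 * Real.sqrt N ^ 2 := by
      have h1 := mul_le_mul_of_nonneg_right hchain hL0.le
      have h2 : (Sf.card : ℝ) * (c₁ * Real.sqrt N / Real.log N) * Real.log N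
          = (Sf.card : ℝ) * (c₁ * Real.sqrt N) := by
        rw [mul_assoc, div_mul_cancel₀ _ hL0.ne']
      rw [h2] at h1
      have h3 : (P.card : ℝ) * (16 * Real.sqrt N) * Real.log N
          = ((P.card : ℝ) * Real.log N) * (16 * Real.sqrt N) := by ring
      rw [h3] at h1
      have h4 : ((P.card : ℝ) * Real.log N) * (16 * Real.sqrt N)
          ≤ (5 * Real.sqrt N) * (16 * Real.sqrt N) :=
        mul_le_mul_of_nonneg_right hPcardR (by positivity)
      calc (Sf.card : ℝ) * (c₁ * Real.sqrt N) ≤ (5 * Real.sqrt N) * (16 * Real.sqrt N) :=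
            le_trans h1 h4
        _ = 80 * Real.sqrt N ^ 2 := by ring
    rw [show (80 / c₁ * Real.sqrt N : ℝ) = 80 * Real.sqrt N / c₁ by ring, le_div_iff₀ hc₁]
    have h5 : (Sf.card : ℝ) * c₁ * Real.sqrt N ≤ (80 * Real.sqrt N) * Real.sqrt N := by
      calc (Sf.card : ℝ) * c₁ * Real.sqrt N = (Sf.card : ℝ) * (c₁ * Real.sqrt N) := by ring
        _ ≤ 80 * Real.sqrt N ^ 2 := hmul
        _ = (80 * Real.sqrt N) * Real.sqrt N := by ring
    exact le_of_mul_le_mul_right h5 hx0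
  -- apply the key bound
  refine key _ (fun α hα => ?_)
  obtain ⟨h1, h2, h3⟩ := hα
  refine ⟨h1, h2, fun q hq => ?_⟩
  rcases h3 q hq with h0 | h0
  · rw [h0]
    exact dvd_zero _
  · have h2' : 2 ≤ padicValNat q (α ^ (q - 1) - 1).natAbs := h0
    have hd : q ^ 2 ∣ (α ^ (q - 1) - 1).natAbs :=
      dvd_trans (pow_dvd_pow q h2') pow_padicValNat_dvd
    have h6 : ((q : ℤ)) ^ 2 ∣ ((α ^ (q - 1) - 1).natAbs : ℤ) := by
      exact_mod_cast Int.natCast_dvd_natCast.mpr hd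
    rwa [Int.dvd_natAbs] at h6
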